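/- For every positive integer n and every k ≥ 0, the number of permutations π of {1,…,n} having exactly k left-to-right maxima equals the number of permutations σ of {1,…,n} having exactly k cycles; moreover, there is a bijection χ from permutations of {1,…,n} to themselves under which, for every π, the set of left-to-right maxima of π equals the set of maximal elements of the cycles of χ(π), the set of run tops of π equals the set of weak deficiency positions of χ(π), and the set of run bottoms of π equals the set of weak deficiency values of χ(π). -/

import Mathlib

open Finset
open scoped Classical

variable {n : ℕ}

/-- `π` has a descent at (0-based) position `k`. -/
def IsDesc (π : Equiv.Perm (Fin n)) (k : ℕ) : Prop :=
  ∃ hk : k + 1 < n, π ⟨k + 1, hk⟩ < π ⟨k, Nat.lt_of_succ_lt hk⟩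

/-- Positions `i ≤ j` lie in the same descending run of `π`:
every step between them is a descent. -/
def SameRunLe (π : Equiv.Perm (Fin n)) (i j : Fin n) : Prop :=
  i ≤ j ∧ ∀ k : ℕ, i.val ≤ k → k < j.val → IsDesc π k

/-- The first position of the descending run containing position `p`. -/
noncomputable def runStartPos (π : Equiv.Perm (Fin n)) (p : Fin n) : Fin n :=
  (Finset.univ.filter fun a => SameRunLe π a p).min'
    ⟨p, Finset.mem_filter.mpr ⟨Finset.mem_univ p,
      le_refl p, fun k hk hk' => absurd hk' (Nat.not_lt.mpr hk)⟩⟩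

/-- The last position of the descending run containing position `p`. -/
noncomputable def runEndPos (π : Equiv.Perm (Fin n)) (p : Fin n) : Fin n :=
  (Finset.univ.filter fun b => SameRunLe π p b).max'
    ⟨p, Finset.mem_filter.mpr ⟨Finset.mem_univ p,
      le_refl p, fun k hk hk' => absurd hk' (Nat.not_lt.mpr hk)⟩⟩

/-- The run top (largest value) of the descending run of `π` containing the value `v`. -/
noncomputable def runTopVal (π : Equiv.Perm (Fin n)) (v : Fin n) : Fin n :=
  π (runStartPos π (π.symm v))

/-- The run bottom (smallest value) of the descending run of `π` containing the value `v`. -/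
noncomputable def runBotVal (π : Equiv.Perm (Fin n)) (v : Fin n) : Fin n :=
  π (runEndPos π (π.symm v))

/-- The set of run tops of `π`. -/
noncomputable def RT (π : Equiv.Perm (Fin n)) : Finset (Fin n) :=
  Finset.univ.filter fun v => runTopVal π v = v

/-- The set of run bottoms of `π`. -/
noncomputable def RB (π : Equiv.Perm (Fin n)) : Finset (Fin n) :=
  Finset.univ.filter fun v => runBotVal π v = v

/-- The descending run of `π` containing the value `v`, as a set of values. -/
noncomputable def runOf (π : Equiv.Perm (Fin n)) (v : Fin n) : Finset (Fin n) :=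
  Finset.univ.filter fun w => runStartPos π (π.symm w) = runStartPos π (π.symm v)

/-- The set of descending runs of `π`, each run regarded as a set of values. -/
noncomputable def runsSet (π : Equiv.Perm (Fin n)) : Finset (Finset (Fin n)) :=
  Finset.univ.image (runOf π)

/-- The set `31∗2(π)`: pairs `(i,j)` with `i+1 < j`, `π i > π j > π (i+1)`, and the run
bottom of the run containing `π i` (and `π (i+1)`) smaller than the run bottom of
the run containing `π j`. -/
noncomputable def Pat31s2 (π : Equiv.Perm (Fin n)) : Finset (Fin n × Fin n) :=
  Finset.univ.filter fun p => ∃ h : p.1.val + 1 < n,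
    p.1.val + 1 < p.2.val ∧ π p.2 < π p.1 ∧ π ⟨p.1.val + 1, h⟩ < π p.2 ∧
    runBotVal π (π p.1) < runBotVal π (π p.2)

/-- The multiset of descent views of `π`. -/
noncomputable def dvM (π : Equiv.Perm (Fin n)) : Multiset (Fin n) :=
  (Pat31s2 π).val.map fun p => π p.2

/-- Invisible inversions of `σ`: pairs `(i,j)` with `i < j` and `σ i > σ j > i`. -/
def invisibleInversions (σ : Equiv.Perm (Fin n)) : Finset (Fin n × Fin n) :=
  Finset.univ.filter fun p => p.1 < p.2 ∧ σ p.2 < σ p.1 ∧ p.1 < σ p.2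

/-- The multiset of invisible inversion bottoms of `σ`. -/
def invInvBottoms (σ : Equiv.Perm (Fin n)) : Multiset (Fin n) :=
  (invisibleInversions σ).val.map fun p => σ p.2

/-- The set of positions of weak deficiencies of `σ`. -/
def weakDefPos (σ : Equiv.Perm (Fin n)) : Finset (Fin n) :=
  Finset.univ.filter fun i => σ i ≤ i

/-- The set of values of weak deficiencies of `σ`. -/
def weakDefVals (σ : Equiv.Perm (Fin n)) : Finset (Fin n) :=
  (weakDefPos σ).image σ

/-- Global ascents of `π`, as 1-based indices `m ∈ {1,…,n}`: `π` restricted to the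
first `m` positions is a permutation of the smallest `m` values. -/
def globalAscents (π : Equiv.Perm (Fin n)) : Finset ℕ :=
  (Finset.Icc 1 n).filter fun m => ∀ i : Fin n, i.val < m → (π i).val < m

/-- The set of left-to-right maxima (as values) of `π`. -/
def lrMax (π : Equiv.Perm (Fin n)) : Finset (Fin n) :=
  Finset.univ.filter fun v => ∀ i : Fin n, i < π.symm v → π i < v

/-- The set of maximal elements of the cycles of `σ`. -/
noncomputable def cycleMaxes (σ : Equiv.Perm (Fin n)) : Finset (Fin n) :=
  Finset.univ.filter fun v => ∀ w : Fin n, σ.SameCycle v w → w ≤ v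

/-- The one-line notation of `π` (0-based values). -/
def oneLine (π : Equiv.Perm (Fin n)) : List ℕ :=
  (List.finRange n).map fun i => (π i : ℕ)

/-- Helper for splitting a list into maximal ascending runs. -/
def addRun (x : ℕ) : List (List ℕ) → List (List ℕ)
  | [] => [[x]]
  | [] :: rest => [x] :: rest
  | (y :: r) :: rest =>
      if x < y then (x :: y :: r) :: rest else [x] :: (y :: r) :: rest

/-- Split a list into its maximal ascending runs. -/
def splitAscRuns (l : List ℕ) : List (List ℕ) := l.foldr addRun []

/-- Sort the ascending runs of `l` in increasing order of their minimal (= first)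
elements and concatenate. -/
def runsortL (l : List ℕ) : List ℕ :=
  ((splitAscRuns l).mergeSort fun r s => decide (r.headI ≤ s.headI)).flatten

/-- The number of occurrences of the vincular pattern `13-2` in the word `l`:
pairs `(i,j)` with `i < j` and `l i < l j < l (i+1)`. -/
def occ132 (l : List ℕ) : ℕ :=
  ((Finset.range l.length ×ˢ Finset.range l.length).filter fun p =>
    p.1 < p.2 ∧ l.getD p.1 0 < l.getD p.2 0 ∧ l.getD p.2 0 < l.getD (p.1 + 1) 0).card

/-- The multiset of inversion bottoms of a bijection from `{1,…,n}∖RT` to `{1,…,n}∖RB`. -/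
noncomputable def invBottomsE (π : Equiv.Perm (Fin n))
    (f : {x : Fin n // x ∉ RT π} ≃ {x : Fin n // x ∉ RB π}) : Multiset (Fin n) :=
  ((Finset.univ :
      Finset ({x : Fin n // x ∉ RT π} × {x : Fin n // x ∉ RT π})).filter fun p =>
    (p.1 : Fin n) < (p.2 : Fin n) ∧ (f p.2 : Fin n) < (f p.1 : Fin n)).val.map
    fun p => (f p.2 : Fin n)

/-- The multiset of descent views of `π` which are not run bottoms. -/
noncomputable def dvNotRB (π : Equiv.Perm (Fin n)) : Multiset (Fin n) :=
  (dvM π).filter fun v => v ∉ RB π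

/-- `f` is the bijection `χ_e(π)`: its multiset of inversion bottoms is the multiset of
descent views of `π` which are not run bottoms. -/
def IsChiE (π : Equiv.Perm (Fin n))
    (f : {x : Fin n // x ∉ RT π} ≃ {x : Fin n // x ∉ RB π}) : Prop :=
  invBottomsE π f = dvNotRB π

/-- The graph of the partial bijection `f`. -/
noncomputable def chiEGraph (π : Equiv.Perm (Fin n))
    (f : {x : Fin n // x ∉ RT π} ≃ {x : Fin n // x ∉ RB π}) : Finset (Fin n × Fin n) :=
  Finset.univ.image fun x : {x : Fin n // x ∉ RT π} => ((x : Fin n), (f x : Fin n))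

/-- The number of cycles (orbits) of `σ`. -/
noncomputable def numCycles (σ : Equiv.Perm (Fin n)) : ℕ :=
  σ.cycleType.card + (Finset.univ.filter fun v => σ v = v).card

namespace Stmt15Aux

variable {n : ℕ} (π : Equiv.Perm (Fin n))

/-- Record (left-to-right maximum) positions. -/
def Recs : Finset (Fin n) := Finset.univ.filter fun i => ∀ j, j < i → π j < π i

def fpred (i : Fin n) : Fin n := ⟨i.val - 1, lt_of_le_of_lt (Nat.sub_le _ _) i.isLt⟩

lemma mem_recs_iff {i : Fin n} : i ∈ Recs π ↔ ∀ j, j < i → π j < π i := by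
  simp [Recs]

lemma zero_mem_recs {i : Fin n} (h : i.val = 0) : i ∈ Recs π := by
  rw [mem_recs_iff]
  intro j hj
  exact absurd hj (by simp [Fin.lt_def, h])

lemma recs_pos_ne_zero {i : Fin n} (h : i ∉ Recs π) : i.val ≠ 0 :=
  fun h0 => h (zero_mem_recs π h0)


/-- Last record position `≤ i`. -/
noncomputable def aF (i : Fin n) : Fin n :=
  ((Recs π).filter (· ≤ i)).max' ⟨⟨0, i.pos⟩, Finset.mem_filter.mpr
    ⟨zero_mem_recs π rfl, by simp [Fin.le_def]⟩⟩

lemma aF_mem_recs (i : Fin n) : aF π i ∈ Recs π :=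
  (Finset.mem_filter.mp (Finset.max'_mem _ _)).1

lemma aF_le (i : Fin n) : aF π i ≤ i := by
  have h := Finset.max'_mem ((Recs π).filter (· ≤ i)) ⟨⟨0, i.pos⟩, Finset.mem_filter.mpr
    ⟨zero_mem_recs π rfl, by simp [Fin.le_def]⟩⟩
  rw [Finset.mem_filter] at h
  exact h.2

lemma le_aF {r i : Fin n} (hr : r ∈ Recs π) (h : r ≤ i) : r ≤ aF π i :=
  Finset.le_max' _ _ (Finset.mem_filter.mpr ⟨hr, by simpa using h⟩)

lemma aF_of_mem {i : Fin n} (h : i ∈ Recs π) : aF π i = i :=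
  le_antisymm (aF_le π i) (le_aF π h (le_refl i))

lemma aF_mono : Monotone (aF π) := by
  intro i j hij
  exact le_aF π (aF_mem_recs π i) (le_trans (aF_le π i) hij)

lemma aF_pred_of_not_mem {i : Fin n} (h : i ∉ Recs π) : aF π (fpred i) = aF π i := by
  have h0 : i.val ≠ 0 := recs_pos_ne_zero π h
  refine le_antisymm (aF_mono π (by simp only [Fin.le_def, fpred]; omega)) ?_
  refine le_aF π (aF_mem_recs π i) ?_
  have h1 : aF π i ≠ i := fun he => h (he ▸ aF_mem_recs π i)
  have := aF_le π i
  simp only [Fin.le_def, fpred]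
  have : (aF π i).val < i.val := lt_of_le_of_ne this (fun hv => h1 (Fin.ext hv))
  omega

/-- Workhorse: values up to position `i` are at most the value at the last record. -/
lemma le_pi_aF : ∀ i : Fin n, ∀ k : Fin n, k ≤ i → π k ≤ π (aF π i) := by
  suffices H : ∀ m : ℕ, ∀ i : Fin n, i.val = m → ∀ k : Fin n, k ≤ i → π k ≤ π (aF π i) by
    intro i; exact H i.val i rfl
  intro m
  induction m using Nat.strong_induction_on with
  | _ m IH' =>
    intro i him k hk
    have IH : ∀ j : Fin n, j.val < i.val → ∀ k : Fin n, k ≤ j → π k ≤ π (aF π j) :=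
      fun j hj => IH' j.val (him ▸ hj) j rfl
    by_cases hi : i ∈ Recs π
    · rw [aF_of_mem π hi]
      rcases eq_or_lt_of_le hk with h | h
      · exact le_of_eq (congrArg π h)
      · exact le_of_lt ((mem_recs_iff π).mp hi k h)
    · have h0 : i.val ≠ 0 := recs_pos_ne_zero π hi
      have hpred : (fpred i).val < i.val := by simp only [fpred]; omega
      rw [← aF_pred_of_not_mem π hi]
      rcases eq_or_lt_of_le hk with h | h
      · -- k = i, i not record: some earlier value is bigger
        subst h
        have : ¬ ∀ j, j < k → π j < π k := by
          simpa [mem_recs_iff] using hi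
        push_neg at this
        obtain ⟨j, hj, hle⟩ := this
        have hj' : j ≤ fpred k := by simp only [Fin.le_def, fpred]; omega
        exact le_trans hle (IH (fpred k) hpred j hj')
      · exact IH (fpred i) hpred k (by simp only [Fin.le_def, fpred]; omega)

lemma pi_lt_aF_of_not_mem {i : Fin n} (h : i ∉ Recs π) : π i < π (aF π i) := by
  have hle := le_pi_aF π i i (le_refl i)
  rcases eq_or_lt_of_le hle with he | hlt
  · exact absurd ((π.injective he) ▸ aF_mem_recs π i) h
  · exact hlt


/-- Last position of the segment (maximal record-free stretch) containing `i`. -/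
noncomputable def eF (i : Fin n) : Fin n :=
  (Finset.univ.filter fun j => aF π j = aF π i).max' ⟨i, by simp⟩

lemma aF_eF (i : Fin n) : aF π (eF π i) = aF π i := by
  have := Finset.max'_mem (Finset.univ.filter fun j => aF π j = aF π i) ⟨i, by simp⟩
  simpa [eF] using this

lemma le_eF {j i : Fin n} (h : aF π j = aF π i) : j ≤ eF π i :=
  Finset.le_max' _ _ (by simpa using h)

lemma self_le_eF (i : Fin n) : i ≤ eF π i := le_eF π rfl

lemma eF_aF (i : Fin n) : eF π (aF π i) = eF π i := by
  unfold eF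
  congr 1
  ext j
  simp [aF_of_mem π (aF_mem_recs π i)]

lemma eF_succ_mem_recs {i : Fin n} (h : (eF π i).val + 1 < n) :
    (⟨(eF π i).val + 1, h⟩ : Fin n) ∈ Recs π := by
  by_contra hc
  set j : Fin n := ⟨(eF π i).val + 1, h⟩ with hj
  have h1 : fpred j = eF π i := by
    simp only [fpred, hj]
    exact Fin.ext (by simp)
  have h2 : aF π j = aF π i := by
    rw [← aF_pred_of_not_mem π hc, h1, aF_eF]
  have := le_eF π h2
  simp only [Fin.le_def, hj] at this
  omega

lemma eF_of_succ_mem {i : Fin n} (h : (i.val + 1 < n)) 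
    (hr : (⟨i.val + 1, h⟩ : Fin n) ∈ Recs π) : eF π i = i := by
  refine le_antisymm ?_ (self_le_eF π i)
  by_contra hc
  push_neg at hc
  have h1 : (⟨i.val + 1, h⟩ : Fin n) ≤ eF π i := by
    simp only [Fin.le_def]
    exact (Fin.lt_def.mp hc)
  have h2 := le_aF π hr h1
  have h3 := aF_eF π i
  have h4 := aF_le π i
  simp only [Fin.le_def] at h1 h2 h4
  rw [h3] at h2
  omega

lemma eF_of_last {i : Fin n} (h : i.val + 1 = n) : eF π i = i := by
  refine le_antisymm ?_ (self_le_eF π i)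
  have := (eF π i).isLt
  simp only [Fin.le_def]; omega

/-- The backward-shift-within-segments map. -/
noncomputable def sF (i : Fin n) : Fin n :=
  if i ∈ Recs π then eF π i else fpred i

lemma aF_sF (i : Fin n) : aF π (sF π i) = aF π i := by
  unfold sF
  split
  · rw [aF_eF]
  · exact aF_pred_of_not_mem π (by assumption)

lemma sF_injective : Function.Injective (sF π) := by
  intro i j hij
  unfold sF at hij
  by_cases hi : i ∈ Recs π <;> by_cases hj : j ∈ Recs π <;>
    simp only [hi, hj, if_pos, if_neg, if_true, if_false] at hij
  · -- both records: e equal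
    have : aF π (eF π i) = aF π (eF π j) := by rw [hij]
    rw [aF_eF, aF_eF, aF_of_mem π hi, aF_of_mem π hj] at this
    exact this
  · -- i record, j not: eF π i = fpred j
    exfalso
    have h0 : j.val ≠ 0 := recs_pos_ne_zero π hj
    have h2 : aF π j = aF π i := by
      rw [← aF_pred_of_not_mem π hj, ← hij, aF_eF, aF_of_mem π hi]
    have := le_eF π h2
    rw [hij] at this
    simp only [Fin.le_def, fpred] at this
    omega
  · exfalso
    have h0 : i.val ≠ 0 := recs_pos_ne_zero π hi
    have h2 : aF π i = aF π j := by
      rw [← aF_pred_of_not_mem π hi, hij, aF_eF, aF_of_mem π hj]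
    have := le_eF π h2
    rw [← hij] at this
    simp only [Fin.le_def, fpred] at this
    omega
  · have h0 : i.val ≠ 0 := recs_pos_ne_zero π hi
    have h1 : j.val ≠ 0 := recs_pos_ne_zero π hj
    simp only [fpred] at hij
    have := congrArg Fin.val hij
    simp only at this
    exact Fin.ext (by omega)

/-- `sF` as a permutation. -/
noncomputable def sE : Equiv.Perm (Fin n) :=
  Equiv.ofBijective (sF π) (Finite.injective_iff_bijective.mp (sF_injective π))

lemma sE_apply (i : Fin n) : sE π i = sF π i := rfl

/-- The bijection χ. -/
noncomputable def chi (π : Equiv.Perm (Fin n)) : Equiv.Perm (Fin n) :=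
  π.symm.trans ((sE π).trans π)

lemma chi_apply (v : Fin n) : chi π v = π (sF π (π.symm v)) := rfl


lemma runStart_eq_self_iff (p : Fin n) :
    runStartPos π p = p ↔ (p.val = 0 ∨ π (fpred p) < π p) := by
  constructor
  · intro h
    by_cases h0 : p.val = 0
    · exact Or.inl h0
    · refine Or.inr ?_
      by_contra hc
      push_neg at hc
      have hne : π p ≠ π (fpred p) := fun he => h0 (by
        have := π.injective he
        simp only [fpred] at this
        have := congrArg Fin.val this
        simp only at this
        omega)
      have hdesc : π p < π (fpred p) := lt_of_le_of_ne hc hne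
      have hmem : fpred p ∈ Finset.univ.filter fun a => SameRunLe π a p := by
        refine Finset.mem_filter.mpr ⟨Finset.mem_univ _, ?_, ?_⟩
        · simp only [Fin.le_def, fpred]; omega
        · intro k hk1 hk2
          simp only [fpred] at hk1
          have hkeq : k = p.val - 1 := by omega
          subst hkeq
          refine ⟨by omega, ?_⟩
          have e1 : (⟨p.val - 1 + 1, by omega⟩ : Fin n) = p := Fin.ext (by simp; omega)
          have e2 : (⟨p.val - 1, by omega⟩ : Fin n) = fpred p := Fin.ext (by simp [fpred])
          rw [e1, e2]
          exact hdesc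
      have h2 : runStartPos π p ≤ fpred p := Finset.min'_le _ _ hmem
      rw [h] at h2
      simp only [Fin.le_def, fpred] at h2
      omega
  · intro h
    have hmem := Finset.min'_mem (Finset.univ.filter fun a => SameRunLe π a p)
      ⟨p, Finset.mem_filter.mpr ⟨Finset.mem_univ p, le_refl p,
        fun k hk hk' => absurd hk' (Nat.not_lt.mpr hk)⟩⟩
    rw [Finset.mem_filter] at hmem
    obtain ⟨-, hle, hall⟩ := hmem
    set a := runStartPos π p with ha
    rcases eq_or_lt_of_le hle with he | hlt
    · exact he
    · exfalso
      rcases h with h0 | hasc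
      · simp only [Fin.lt_def, h0] at hlt
        omega
      · have h0 : p.val ≠ 0 := by
          intro h0
          have : fpred p = p := Fin.ext (by simp [fpred, h0])
          rw [this] at hasc
          exact lt_irrefl _ hasc
        have hd := hall (p.val - 1) (by simp only [Fin.lt_def] at hlt; omega) (by omega)
        obtain ⟨hk, hd⟩ := hd
        have e1 : (⟨p.val - 1 + 1, hk⟩ : Fin n) = p := Fin.ext (by simp; omega)
        have e2 : (⟨p.val - 1, Nat.lt_of_succ_lt hk⟩ : Fin n) = fpred p := Fin.ext (by simp [fpred])
        rw [e1, e2] at hd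
        exact absurd (lt_trans hd hasc) (lt_irrefl _)

lemma runEnd_eq_self_iff (p : Fin n) :
    runEndPos π p = p ↔ (p.val + 1 = n ∨ ∃ h : p.val + 1 < n, π p < π ⟨p.val + 1, h⟩) := by
  constructor
  · intro h
    by_cases h1 : p.val + 1 = n
    · exact Or.inl h1
    · have h1' : p.val + 1 < n := by have := p.isLt; omega
      refine Or.inr ⟨h1', ?_⟩
      by_contra hc
      push_neg at hc
      have hne : π ⟨p.val + 1, h1'⟩ ≠ π p := fun he => by
        have := π.injective he
        have := congrArg Fin.val this
        simp only at this
        omega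
      have hdesc : π ⟨p.val + 1, h1'⟩ < π p := lt_of_le_of_ne hc hne
      have hmem : (⟨p.val + 1, h1'⟩ : Fin n) ∈ Finset.univ.filter fun b => SameRunLe π p b := by
        refine Finset.mem_filter.mpr ⟨Finset.mem_univ _, ?_, ?_⟩
        · simp only [Fin.le_def]; omega
        · intro k hk1 hk2
          simp only at hk2
          have hkeq : k = p.val := by omega
          subst hkeq
          exact ⟨h1', hdesc⟩
      have h2 : (⟨p.val + 1, h1'⟩ : Fin n) ≤ runEndPos π p := Finset.le_max' _ _ hmem
      rw [h] at h2
      simp only [Fin.le_def] at h2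
      omega
  · intro h
    have hmem := Finset.max'_mem (Finset.univ.filter fun b => SameRunLe π p b)
      ⟨p, Finset.mem_filter.mpr ⟨Finset.mem_univ p, le_refl p,
        fun k hk hk' => absurd hk' (Nat.not_lt.mpr hk)⟩⟩
    rw [Finset.mem_filter] at hmem
    obtain ⟨-, hle, hall⟩ := hmem
    set b := runEndPos π p with hb
    rcases eq_or_lt_of_le hle with he | hlt
    · exact he.symm
    · exfalso
      rcases h with h1 | ⟨h1, hasc⟩
      · have := b.isLt
        simp only [Fin.lt_def] at hlt
        omega
      · have hd := hall p.val (le_refl _) (by simp only [Fin.lt_def] at hlt; omega)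
        obtain ⟨hk, hd⟩ := hd
        have e2 : (⟨p.val, Nat.lt_of_succ_lt hk⟩ : Fin n) = p := Fin.ext rfl
        have e1 : (⟨p.val + 1, hk⟩ : Fin n) = ⟨p.val + 1, h1⟩ := rfl
        rw [e1, e2] at hd
        exact absurd (lt_trans hd hasc) (lt_irrefl _)

lemma mem_RT_iff (v : Fin n) :
    v ∈ RT π ↔ ((π.symm v).val = 0 ∨ π (fpred (π.symm v)) < v) := by
  rw [RT, Finset.mem_filter]
  simp only [Finset.mem_univ, true_and, runTopVal]
  set p := π.symm v with hp
  have hv : π p = v := π.apply_symm_apply v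
  rw [← hv]
  constructor
  · intro h
    exact (runStart_eq_self_iff π p).mp (π.injective h)
  · intro h
    rw [(runStart_eq_self_iff π p).mpr h]

lemma mem_RB_iff (v : Fin n) :
    v ∈ RB π ↔ ((π.symm v).val + 1 = n ∨
      ∃ h : (π.symm v).val + 1 < n, v < π ⟨(π.symm v).val + 1, h⟩) := by
  rw [RB, Finset.mem_filter]
  simp only [Finset.mem_univ, true_and, runBotVal]
  set p := π.symm v with hp
  have hv : π p = v := π.apply_symm_apply v
  rw [← hv]
  constructor
  · intro h
    exact (runEnd_eq_self_iff π p).mp (π.injective h)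
  · intro h
    rw [(runEnd_eq_self_iff π p).mpr h]


lemma fpred_lt {p : Fin n} (h : p.val ≠ 0) : fpred p < p := by
  simp only [Fin.lt_def, fpred]; omega

lemma pi_mem_RT_of_recs {r : Fin n} (hr : r ∈ Recs π) : π r ∈ RT π := by
  rw [mem_RT_iff]
  rw [π.symm_apply_apply]
  by_cases h0 : r.val = 0
  · exact Or.inl h0
  · exact Or.inr ((mem_recs_iff π).mp hr (fpred r) (fpred_lt h0))

lemma chi_apply_pi (r : Fin n) : chi π (π r) = π (sF π r) := by
  rw [chi_apply, π.symm_apply_apply]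

/-- Property A: weak deficiency positions of χ(π) are the run tops of π. -/
lemma weakDefPos_chi : weakDefPos (chi π) = RT π := by
  ext v
  rw [weakDefPos, Finset.mem_filter, mem_RT_iff]
  simp only [Finset.mem_univ, true_and, chi_apply]
  set p := π.symm v with hp
  have hv : π p = v := π.apply_symm_apply v
  rw [← hv]
  by_cases hr : p ∈ Recs π
  · have hRHS : p.val = 0 ∨ π (fpred p) < π p := by
      by_cases h0 : p.val = 0
      · exact Or.inl h0
      · exact Or.inr ((mem_recs_iff π).mp hr (fpred p) (fpred_lt h0))
    have hLHS : π (sF π p) ≤ π p := by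
      rw [sF, if_pos hr]
      calc π (eF π p) ≤ π (aF π (eF π p)) := le_pi_aF π _ _ (le_refl _)
        _ = π p := by rw [aF_eF, aF_of_mem π hr]
    simp only [hLHS, true_iff]
    exact hRHS
  · have h0 : p.val ≠ 0 := recs_pos_ne_zero π hr
    rw [sF, if_neg hr]
    constructor
    · intro h
      refine Or.inr (lt_of_le_of_ne h fun he => ?_)
      have := π.injective he
      exact absurd this (ne_of_lt (fpred_lt h0))
    · rintro (h | h)
      · exact absurd h h0
      · exact le_of_lt h

lemma sF_of_mem {i : Fin n} (h : i ∈ Recs π) : sF π i = eF π i := by simp [sF, h]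

lemma sF_of_not_mem {i : Fin n} (h : i ∉ Recs π) : sF π i = fpred i := by simp [sF, h]

lemma chi_pi_mem_RB {p : Fin n} (hT : p.val = 0 ∨ π (fpred p) < π p) : chi π (π p) ∈ RB π := by
  rw [chi_apply_pi, mem_RB_iff, π.symm_apply_apply]
  by_cases hrec : p ∈ Recs π
  · rw [sF_of_mem π hrec]
    by_cases hlast : (eF π p).val + 1 = n
    · exact Or.inl hlast
    · have hlt : (eF π p).val + 1 < n := by have := (eF π p).isLt; omega
      exact Or.inr ⟨hlt, (mem_recs_iff π).mp (eF_succ_mem_recs π hlt) (eF π p)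
        (by simp only [Fin.lt_def]; omega)⟩
  · have h0 : p.val ≠ 0 := recs_pos_ne_zero π hrec
    rw [sF_of_not_mem π hrec]
    have hlt : (fpred p).val + 1 < n := by have := p.isLt; simp only [fpred]; omega
    refine Or.inr ⟨hlt, ?_⟩
    have hpe : (⟨(fpred p).val + 1, hlt⟩ : Fin n) = p := Fin.ext (by simp only [fpred]; omega)
    rw [hpe]
    exact hT.resolve_left h0

/-- Property B: weak deficiency values of χ(π) are the run bottoms of π. -/
lemma weakDefVals_chi : weakDefVals (chi π) = RB π := by
  rw [weakDefVals, weakDefPos_chi]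
  apply Finset.Subset.antisymm
  · intro w hw
    rw [Finset.mem_image] at hw
    obtain ⟨v, hvRT, rfl⟩ := hw
    rw [mem_RT_iff] at hvRT
    have h2 : chi π (π (π.symm v)) ∈ RB π := by
      refine chi_pi_mem_RB π ?_
      rcases hvRT with h | h
      · exact Or.inl h
      · exact Or.inr (by rwa [π.apply_symm_apply])
    rwa [π.apply_symm_apply] at h2
  · intro v hv
    rw [Finset.mem_image]
    set p := π.symm v with hp
    have hpv : π p = v := π.apply_symm_apply v
    rw [mem_RB_iff] at hv
    rcases hv with hlast | ⟨hlt, hasc⟩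
    · refine ⟨π (aF π p), pi_mem_RT_of_recs π (aF_mem_recs π p), ?_⟩
      rw [chi_apply_pi, sF_of_mem π (aF_mem_recs π p), eF_aF, eF_of_last π hlast, hpv]
    · by_cases hsucc : (⟨p.val + 1, hlt⟩ : Fin n) ∈ Recs π
      · refine ⟨π (aF π p), pi_mem_RT_of_recs π (aF_mem_recs π p), ?_⟩
        rw [chi_apply_pi, sF_of_mem π (aF_mem_recs π p), eF_aF,
          eF_of_succ_mem π hlt hsucc, hpv]
      · refine ⟨π ⟨p.val + 1, hlt⟩, ?_, ?_⟩
        · rw [mem_RT_iff, π.symm_apply_apply]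
          refine Or.inr ?_
          have heq : fpred (⟨p.val + 1, hlt⟩ : Fin n) = p := Fin.ext (by simp [fpred])
          rw [heq, hpv]
          exact hasc
        · rw [chi_apply_pi, sF_of_not_mem π hsucc]
          have heq : fpred (⟨p.val + 1, hlt⟩ : Fin n) = p := Fin.ext (by simp [fpred])
          rw [heq, hpv]


lemma mem_lrMax_iff (v : Fin n) : v ∈ lrMax π ↔ π.symm v ∈ Recs π := by
  rw [lrMax, Finset.mem_filter, mem_recs_iff]
  simp only [Finset.mem_univ, true_and]
  have hv : π (π.symm v) = v := π.apply_symm_apply v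
  constructor
  · intro h j hj; rw [hv]; exact h j hj
  · intro h j hj; rw [← hv]; exact h j hj

lemma aF_chi (v : Fin n) : aF π (π.symm (chi π v)) = aF π (π.symm v) := by
  rw [chi_apply, π.symm_apply_apply, aF_sF]

lemma aF_chi_zpow (k : ℤ) : ∀ v : Fin n,
    aF π (π.symm ((chi π ^ k) v)) = aF π (π.symm v) := by
  induction k using Int.induction_on with
  | zero => intro v; simp
  | succ k IH =>
      intro v
      rw [zpow_add_one, Equiv.Perm.mul_apply, IH, aF_chi]
  | pred k IH =>
      intro v
      rw [zpow_sub_one, Equiv.Perm.mul_apply, IH]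
      conv_rhs => rw [← (show chi π ((chi π)⁻¹ v) = v from Equiv.apply_symm_apply _ _)]
      rw [aF_chi]

lemma sameCycle_to_aF {v w : Fin n} (h : (chi π).SameCycle v w) :
    aF π (π.symm v) = aF π (π.symm w) := by
  obtain ⟨k, hk⟩ := h
  rw [← hk, aF_chi_zpow]

lemma sameCycle_aF_self : ∀ p : Fin n, (chi π).SameCycle (π p) (π (aF π p)) := by
  suffices H : ∀ m : ℕ, ∀ p : Fin n, p.val = m → (chi π).SameCycle (π p) (π (aF π p)) by
    intro p; exact H p.val p rfl
  intro m
  induction m using Nat.strong_induction_on with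
  | _ m IH' =>
    intro p hpm
    by_cases hr : p ∈ Recs π
    · rw [aF_of_mem π hr]
    · have h0 : p.val ≠ 0 := recs_pos_ne_zero π hr
      have hstep : (chi π).SameCycle (π p) (π (fpred p)) :=
        ⟨1, by rw [zpow_one, chi_apply_pi, sF_of_not_mem π hr]⟩
      have hIH := IH' (fpred p).val (by simp only [fpred]; omega) (fpred p) rfl
      rw [aF_pred_of_not_mem π hr] at hIH
      exact hstep.trans hIH

lemma sameCycle_iff_aF {v w : Fin n} :
    (chi π).SameCycle v w ↔ aF π (π.symm v) = aF π (π.symm w) := by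
  constructor
  · exact sameCycle_to_aF π
  · intro h
    have h1 := sameCycle_aF_self π (π.symm v)
    have h2 := sameCycle_aF_self π (π.symm w)
    rw [π.apply_symm_apply] at h1 h2
    rw [h] at h1
    exact h1.trans h2.symm

/-- Property C: left-to-right maxima of π are the cycle maxima of χ(π). -/
lemma lrMax_chi : lrMax π = cycleMaxes (chi π) := by
  ext v
  rw [mem_lrMax_iff, cycleMaxes, Finset.mem_filter]
  simp only [Finset.mem_univ, true_and]
  constructor
  · intro hr w hsc
    rw [sameCycle_iff_aF] at hsc
    have h1 : π (π.symm w) ≤ π (aF π (π.symm w)) := le_pi_aF π _ _ (le_refl _)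
    rw [π.apply_symm_apply, ← hsc, aF_of_mem π hr, π.apply_symm_apply] at h1
    exact h1
  · intro h
    by_contra hr
    have hsc : (chi π).SameCycle v (π (aF π (π.symm v))) := by
      rw [sameCycle_iff_aF, π.symm_apply_apply, aF_of_mem π (aF_mem_recs π _)]
    have hle := h _ hsc
    have hlt := pi_lt_aF_of_not_mem π hr
    rw [π.apply_symm_apply] at hlt
    exact absurd hle (not_le.mpr hlt)


lemma fixed_mem_cycleMaxes (σ : Equiv.Perm (Fin n)) {v : Fin n} (h : σ v = v) :
    v ∈ cycleMaxes σ := by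
  rw [cycleMaxes, Finset.mem_filter]
  refine ⟨Finset.mem_univ _, fun w hw => ?_⟩
  obtain ⟨k, hk⟩ := hw
  rw [Equiv.Perm.zpow_apply_eq_self_of_apply_eq_self h k] at hk
  exact le_of_eq hk.symm

lemma cycleMax_unique (σ : Equiv.Perm (Fin n)) {v w : Fin n}
    (hv : v ∈ cycleMaxes σ) (hw : w ∈ cycleMaxes σ) (h : σ.SameCycle v w) : v = w := by
  rw [cycleMaxes, Finset.mem_filter] at hv hw
  exact le_antisymm (hw.2 v h.symm) (hv.2 w h)

lemma card_cycleMaxes (σ : Equiv.Perm (Fin n)) : (cycleMaxes σ).card = numCycles σ := by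
  classical
  have hsplit := Finset.card_filter_add_card_filter_not
    (s := cycleMaxes σ) (p := fun v => σ v = v)
  rw [numCycles]
  have hfix : (cycleMaxes σ).filter (fun v => σ v = v)
      = Finset.univ.filter fun v => σ v = v := by
    ext v
    simp only [Finset.mem_filter, Finset.mem_univ, true_and]
    exact ⟨fun h => h.2, fun h => ⟨fixed_mem_cycleMaxes σ h, h⟩⟩
  have hnonfix : ((cycleMaxes σ).filter (fun v => ¬ σ v = v)).card
      = σ.cycleFactorsFinset.card := by
    apply Finset.card_bij (fun v _ => σ.cycleOf v)
    · intro v hv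
      rw [Finset.mem_filter] at hv
      exact Equiv.Perm.cycleOf_mem_cycleFactorsFinset_iff.mpr
        (Equiv.Perm.mem_support.mpr hv.2)
    · intro v hv w hw hvw
      rw [Finset.mem_filter] at hv hw
      have hvs : v ∈ (σ.cycleOf v).support :=
        Equiv.Perm.mem_support_cycleOf_iff.mpr
          ⟨Equiv.Perm.SameCycle.refl _ _, Equiv.Perm.mem_support.mpr hv.2⟩
      rw [hvw] at hvs
      have hsc : σ.SameCycle w v := (Equiv.Perm.mem_support_cycleOf_iff.mp hvs).1
      exact (cycleMax_unique σ hv.1 hw.1 hsc.symm)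
    · intro c hc
      have hcyc : c.IsCycle := (Equiv.Perm.mem_cycleFactorsFinset_iff.mp hc).1
      obtain ⟨x, hx⟩ := hcyc.nonempty_support
      set m := c.support.max' ⟨x, hx⟩ with hm
      have hmmem : m ∈ c.support := Finset.max'_mem _ _
      have hceq : c = σ.cycleOf m := Equiv.Perm.cycle_is_cycleOf hmmem hc
      have hmfix : σ m ≠ m := by
        have h1 : c m ≠ m := Equiv.Perm.mem_support.mp hmmem
        have h2 : c m = σ m := (Equiv.Perm.mem_cycleFactorsFinset_iff.mp hc).2 m hmmem
        rw [h2] at h1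
        exact h1
      refine ⟨m, Finset.mem_filter.mpr ⟨?_, hmfix⟩, hceq.symm⟩
      rw [cycleMaxes, Finset.mem_filter]
      refine ⟨Finset.mem_univ _, fun w hw => ?_⟩
      have : w ∈ (σ.cycleOf m).support :=
        Equiv.Perm.mem_support_cycleOf_iff.mpr ⟨hw, Equiv.Perm.mem_support.mpr hmfix⟩
      rw [← hceq] at this
      exact Finset.le_max' _ _ this
  have hct : σ.cycleType.card = σ.cycleFactorsFinset.card := by
    rw [Equiv.Perm.cycleType_def, Multiset.card_map]
    rfl
  rw [← hsplit, hfix, hnonfix, hct]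
  exact Nat.add_comm _ _


lemma record_mem_cycleMaxes {i : Fin n} (hi : i ∈ Recs π) : π i ∈ cycleMaxes (chi π) := by
  rw [← lrMax_chi, mem_lrMax_iff, π.symm_apply_apply]
  exact hi

lemma record_le {i : Fin n} (hi : i ∈ Recs π) {v : Fin n} (hv : v ∈ cycleMaxes (chi π))
    (hgt : ∀ k : Fin n, k < i → π k < v) : π i ≤ v := by
  rw [← lrMax_chi, mem_lrMax_iff] at hv
  have hqv : π (π.symm v) = v := π.apply_symm_apply v
  rcases lt_trichotomy (π.symm v) i with h | h | h
  · have h2 := hgt (π.symm v) h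
    rw [hqv] at h2
    exact absurd h2 (lt_irrefl v)
  · rw [← h, hqv]
  · rw [← hqv]
    exact le_of_lt ((mem_recs_iff π).mp hv i h)

lemma pi_eq_symm_of_not_mem {i : Fin n} (hi : i ∉ Recs π) :
    π i = (chi π).symm (π (fpred i)) := by
  have h : chi π (π i) = π (fpred i) := by
    rw [chi_apply_pi, sF_of_not_mem π hi]
  rw [← h, Equiv.symm_apply_apply]

lemma mem_recs_iff_chi {i : Fin n} (h0 : i.val ≠ 0) :
    i ∈ Recs π ↔ (chi π).symm (π (fpred i)) = π (aF π (fpred i)) := by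
  constructor
  · intro hi
    have hlt : (fpred i).val + 1 < n := by have := i.isLt; simp only [fpred]; omega
    have hieq : (⟨(fpred i).val + 1, hlt⟩ : Fin n) = i := Fin.ext (by simp only [fpred]; omega)
    have he : eF π (fpred i) = fpred i := by
      refine eF_of_succ_mem π hlt ?_
      rw [hieq]
      exact hi
    have h : chi π (π (aF π (fpred i))) = π (fpred i) := by
      rw [chi_apply_pi, sF_of_mem π (aF_mem_recs π _), eF_aF, he]
    rw [← h, Equiv.symm_apply_apply]
  · intro h
    by_contra hi
    have h2 : chi π (π i) = π (fpred i) := by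
      rw [chi_apply_pi, sF_of_not_mem π hi]
    rw [← h2, Equiv.symm_apply_apply] at h
    have h3 := congrArg Fin.val (π.injective h)
    have hle := aF_le π (fpred i)
    simp only [Fin.le_def, fpred] at hle h3
    omega

lemma chi_injective :
    Function.Injective (chi : Equiv.Perm (Fin n) → Equiv.Perm (Fin n)) := by
  intro π π' hEq
  suffices H : ∀ m : ℕ, ∀ i : Fin n, i.val = m → π i = π' i by
    apply Equiv.ext
    intro i
    exact H i.val i rfl
  intro m
  induction m using Nat.strong_induction_on with
  | _ m IH =>
    intro i him
    by_cases hm : m = 0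
    · -- base case: position 0
      subst hm
      have hi : i ∈ Recs π := zero_mem_recs π him
      have hi' : i ∈ Recs π' := zero_mem_recs π' him
      have hvac : ∀ (τ : Equiv.Perm (Fin n)) (v : Fin n), ∀ k : Fin n, k < i → τ k < v := by
        intro τ v k hk
        rw [Fin.lt_def, him] at hk
        omega
      apply le_antisymm
      · exact record_le π hi (by rw [hEq]; exact record_mem_cycleMaxes π' hi') (hvac π _)
      · exact record_le π' hi' (by rw [← hEq]; exact record_mem_cycleMaxes π hi) (hvac π' _)
    · -- inductive step
      have h0 : i.val ≠ 0 := by omega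
      set q := fpred i with hqdef
      have hqv : q.val = m - 1 := by simp only [hqdef, fpred, him]
      have hIHle : ∀ k : Fin n, k ≤ q → π k = π' k := by
        intro k hk
        refine IH k.val ?_ k rfl
        rw [Fin.le_def, hqv] at hk
        omega
      have hpq : π q = π' q := hIHle q (le_refl q)
      have hM : π (aF π q) = π' (aF π' q) := by
        apply le_antisymm
        · rw [hIHle (aF π q) (aF_le π q)]
          exact le_pi_aF π' q _ (aF_le π q)
        · rw [← hIHle (aF π' q) (aF_le π' q)]
          exact le_pi_aF π q _ (aF_le π' q)
      have hRecIff : i ∈ Recs π ↔ i ∈ Recs π' := by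
        rw [mem_recs_iff_chi π h0, mem_recs_iff_chi π' h0, hEq, ← hqdef, hpq, hM]
      by_cases hrec : i ∈ Recs π
      · have hrec' : i ∈ Recs π' := hRecIff.mp hrec
        have hlt_of_lt : ∀ k : Fin n, k < i → k ≤ q := by
          intro k hk
          rw [Fin.lt_def, him] at hk
          rw [Fin.le_def, hqv]
          omega
        apply le_antisymm
        · refine record_le π hrec (by rw [hEq]; exact record_mem_cycleMaxes π' hrec') ?_
          intro k hk
          calc π k ≤ π (aF π q) := le_pi_aF π q k (hlt_of_lt k hk)
            _ = π' (aF π' q) := hM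
            _ < π' i := (mem_recs_iff π').mp hrec' _ (lt_of_le_of_lt (aF_le π' q)
                (by rw [Fin.lt_def, hqv, him]; omega))
        · refine record_le π' hrec' (by rw [← hEq]; exact record_mem_cycleMaxes π hrec) ?_
          intro k hk
          calc π' k ≤ π' (aF π' q) := le_pi_aF π' q k (hlt_of_lt k hk)
            _ = π (aF π q) := hM.symm
            _ < π i := (mem_recs_iff π).mp hrec _ (lt_of_le_of_lt (aF_le π q)
                (by rw [Fin.lt_def, hqv, him]; omega))
      · have hrec' : i ∉ Recs π' := fun h => hrec (hRecIff.mpr h)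
        rw [pi_eq_symm_of_not_mem π hrec, pi_eq_symm_of_not_mem π' hrec', hEq, ← hqdef, hpq]

end Stmt15Aux


/-- the number of left-to-right maxima is equidistributed with the
number of cycles; moreover a bijection `χ` exists sending left-to-right maxima to
cycle maxima, run tops to weak deficiency positions, and run bottoms to weak
deficiency values. -/
theorem stmt15 (n : ℕ) (hn : 0 < n) :
    (∀ k : ℕ,
      (Finset.univ.filter fun π : Equiv.Perm (Fin n) => (lrMax π).card = k).card =
      (Finset.univ.filter fun σ : Equiv.Perm (Fin n) => numCycles σ = k).card) ∧
    ∃ χ : Equiv.Perm (Fin n) → Equiv.Perm (Fin n), Function.Bijective χ ∧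
      ∀ π : Equiv.Perm (Fin n),
        lrMax π = cycleMaxes (χ π) ∧
        RT π = weakDefPos (χ π) ∧
        RB π = weakDefVals (χ π) := by
  constructor
  · intro k
    apply Finset.card_bij (fun π _ => Stmt15Aux.chi π)
    · intro π hπ
      rw [Finset.mem_filter] at hπ ⊢
      refine ⟨Finset.mem_univ _, ?_⟩
      rw [← Stmt15Aux.card_cycleMaxes, ← Stmt15Aux.lrMax_chi]
      exact hπ.2
    · intro a _ b _ h
      exact Stmt15Aux.chi_injective h
    · intro σ hσ
      obtain ⟨π, rfl⟩ :=
        (Finite.injective_iff_surjective.mp Stmt15Aux.chi_injective) σ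
      refine ⟨π, Finset.mem_filter.mpr ⟨Finset.mem_univ _, ?_⟩, rfl⟩
      rw [Finset.mem_filter] at hσ
      rw [Stmt15Aux.lrMax_chi, Stmt15Aux.card_cycleMaxes]
      exact hσ.2
  · refine ⟨Stmt15Aux.chi,
      Finite.injective_iff_bijective.mp Stmt15Aux.chi_injective, fun π => ?_⟩
    exact ⟨Stmt15Aux.lrMax_chi π, (Stmt15Aux.weakDefPos_chi π).symm,
      (Stmt15Aux.weakDefVals_chi π).symm⟩
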